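/- Consider a K-player game (K > 1) in which player k's action set is a nonempty compact interval 𝒰_k = [U_k^min, U_k^max] ⊂ ℝ and player k's cost J_k is twice continuously differentiable on an open set containing 𝒰 := 𝒰_1 × … × 𝒰_K, and suppose that for every k and every u ∈ 𝒰, ∂²J_k/∂u_k²(u) > Σ_{ℓ≠k} |∂²J_k/∂u_k∂u_ℓ(u)|. Then the simultaneous best-response map BR : 𝒰 → 𝒰, whose k-th component BR_k(u) is the unique minimizer of v ↦ J_k(v, u_{-k}) on 𝒰_k, is well defined and is a contraction with respect to the sup norm: there exists c ∈ [0,1) such that max_k |BR_k(u) − BR_k(v)| ≤ c · max_k |u_k − v_k| for all u, v ∈ 𝒰. -/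

import Mathlib

open Function Set Filter Topology

/-- Partial derivative of `f : (Fin K → ℝ) → ℝ` with respect to the `k`-th
coordinate, at the point `u`. -/
noncomputable def pd {K : ℕ} (k : Fin K) (f : (Fin K → ℝ) → ℝ)
    (u : Fin K → ℝ) : ℝ :=
  deriv (fun v => f (Function.update u k v)) (u k)

lemma hasDerivAt_update_fun {K : ℕ} (w : Fin K → ℝ) (k : Fin K) (v₀ : ℝ) :
    HasDerivAt (fun v => Function.update w k v) (Pi.single k (1:ℝ)) v₀ := by
  have h : (fun v : ℝ => Function.update w k v)
      = fun v => w + (v - w k) • (Pi.single k 1 : Fin K → ℝ) := by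
    funext v
    funext i
    rcases eq_or_ne i k with rfl | h
    · simp
    · simp [Function.update_of_ne h, Pi.single_eq_of_ne h]
  rw [h]
  simpa using (((hasDerivAt_id v₀).sub_const (w k)).smul_const (Pi.single k 1 : Fin K → ℝ)).const_add w

lemma hasDerivAt_comp_update {K : ℕ} {f : (Fin K → ℝ) → ℝ} {φ : (Fin K → ℝ) →L[ℝ] ℝ}
    {w : Fin K → ℝ} (hf : HasFDerivAt f φ w) (k : Fin K) :
    HasDerivAt (fun v => f (Function.update w k v)) (φ (Pi.single k 1)) (w k) := by
  have h := hasDerivAt_update_fun w k (w k)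
  have hw : Function.update w k (w k) = w := Function.update_eq_self k w
  exact HasFDerivAt.comp_hasDerivAt (w k) (hw.symm ▸ hf) h

lemma hasFDerivAt_clm_eval {K : ℕ} {f : (Fin K → ℝ) → ((Fin K → ℝ) →L[ℝ] ℝ)}
    {φ : (Fin K → ℝ) →L[ℝ] ((Fin K → ℝ) →L[ℝ] ℝ)} {w e₀ : Fin K → ℝ}
    (hf : HasFDerivAt f φ w) :
    HasFDerivAt (fun z => f z e₀) ((ContinuousLinearMap.apply ℝ ℝ e₀).comp φ) w := by
  have h0 : HasFDerivAt ((ContinuousLinearMap.apply ℝ ℝ e₀) ∘ f)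
      ((ContinuousLinearMap.apply ℝ ℝ e₀).comp φ) w :=
    (ContinuousLinearMap.apply ℝ ℝ e₀).hasFDerivAt.comp w hf
  exact h0

lemma hasDerivAt_comp_update_clm {K : ℕ} {f : (Fin K → ℝ) → ((Fin K → ℝ) →L[ℝ] ℝ)}
    {φ : (Fin K → ℝ) →L[ℝ] ((Fin K → ℝ) →L[ℝ] ℝ)}
    {w : Fin K → ℝ} (hf : HasFDerivAt f φ w) (k l : Fin K) :
    HasDerivAt (fun v => f (Function.update w l v) (Pi.single k 1))
      (φ (Pi.single l 1) (Pi.single k 1)) (w l) := by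
  have hf' : HasFDerivAt (fun z => f z (Pi.single k 1))
      ((ContinuousLinearMap.apply ℝ ℝ (Pi.single k 1)).comp φ) w :=
    hasFDerivAt_clm_eval hf
  have h := hasDerivAt_update_fun w l (w l)
  have hw : Function.update w l (w l) = w := Function.update_eq_self l w
  have := HasFDerivAt.comp_hasDerivAt (w l) (hw.symm ▸ hf') h
  exact this

/-- Variational inequality: at a minimizer `a` of a differentiable function on `[A,B]`,
the derivative `d` satisfies `0 ≤ d * (w - a)` for every `w ∈ [A,B]`. -/
lemma deriv_mul_nonneg_of_min {A B a w d : ℝ} {g : ℝ → ℝ}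
    (ha : a ∈ Set.Icc A B) (hw : w ∈ Set.Icc A B)
    (hmin : ∀ z ∈ Set.Icc A B, g a ≤ g z) (hd : HasDerivAt g d a) :
    0 ≤ d * (w - a) := by
  rcases lt_trichotomy w a with h | h | h
  · have hd' : HasDerivWithinAt g d (Set.Iio a) a := hd.hasDerivWithinAt
    have ht := hasDerivWithinAt_iff_tendsto_slope.mp hd'
    have hss : Set.Iio a \ {a} = Set.Iio a :=
      Set.diff_singleton_eq_self (by simp)
    rw [hss] at ht
    have hd0 : d ≤ 0 := by
      refine le_of_tendsto ht ?_
      filter_upwards [Ioo_mem_nhdsLT h] with z hz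
      have hzI : z ∈ Set.Icc A B := ⟨le_trans hw.1 hz.1.le, le_trans hz.2.le ha.2⟩
      have h1 : 0 ≤ g z - g a := sub_nonneg.mpr (hmin z hzI)
      have hza : z - a < 0 := sub_neg.mpr hz.2
      rw [slope_def_field]
      exact div_nonpos_of_nonneg_of_nonpos h1 hza.le
    nlinarith
  · simp [h]
  · have hd' : HasDerivWithinAt g d (Set.Ioi a) a := hd.hasDerivWithinAt
    have ht := hasDerivWithinAt_iff_tendsto_slope.mp hd'
    have hss : Set.Ioi a \ {a} = Set.Ioi a :=
      Set.diff_singleton_eq_self (by simp)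
    rw [hss] at ht
    have hd0 : 0 ≤ d := by
      refine ge_of_tendsto ht ?_
      filter_upwards [Ioo_mem_nhdsGT h] with z hz
      have hzI : z ∈ Set.Icc A B := ⟨le_trans ha.1 hz.1.le, le_trans hz.2.le hw.2⟩
      have h1 : 0 ≤ g z - g a := sub_nonneg.mpr (hmin z hzI)
      have hza : 0 < z - a := sub_pos.mpr hz.1
      rw [slope_def_field]
      exact div_nonneg h1 hza.le
    exact mul_nonneg hd0 (by linarith)

set_option maxHeartbeats 2000000 in
/-- Under strict diagonal dominance of the second derivatives of the costs, the
simultaneous best-response map `BR` (whose `k`-th component is the unique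
minimizer of the own cost over the own action interval) is well defined — i.e.
any minimizer coincides with `BR u k` — and is a contraction for the sup norm
on the product of the action intervals. -/
theorem best_response_contraction
    (K : ℕ) (hK : 1 < K)
    (Umin Umax : Fin K → ℝ) (hU : ∀ k, Umin k ≤ Umax k)
    (J : Fin K → (Fin K → ℝ) → ℝ)
    (O : Set (Fin K → ℝ)) (hO : IsOpen O)
    (hUO : (Set.univ.pi fun k => Set.Icc (Umin k) (Umax k)) ⊆ O)
    (hsmooth : ∀ k, ContDiffOn ℝ 2 (J k) O)
    (hdom : ∀ k, ∀ u ∈ Set.univ.pi fun k => Set.Icc (Umin k) (Umax k),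
      ∑ l ∈ Finset.univ.erase k, |pd l (pd k (J k)) u| < pd k (pd k (J k)) u)
    (BR : (Fin K → ℝ) → Fin K → ℝ)
    (hBR : ∀ u ∈ Set.univ.pi fun k => Set.Icc (Umin k) (Umax k), ∀ k,
      BR u k ∈ Set.Icc (Umin k) (Umax k) ∧
      ∀ v ∈ Set.Icc (Umin k) (Umax k),
        J k (Function.update u k (BR u k)) ≤ J k (Function.update u k v)) :
    (∀ u ∈ Set.univ.pi fun k => Set.Icc (Umin k) (Umax k), ∀ k,
      ∀ m ∈ Set.Icc (Umin k) (Umax k),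
        (∀ v ∈ Set.Icc (Umin k) (Umax k),
          J k (Function.update u k m) ≤ J k (Function.update u k v)) →
        m = BR u k) ∧
    ∃ c : ℝ, 0 ≤ c ∧ c < 1 ∧
      ∀ u ∈ Set.univ.pi fun k => Set.Icc (Umin k) (Umax k),
      ∀ v ∈ Set.univ.pi fun k => Set.Icc (Umin k) (Umax k),
      ∀ k, |BR u k - BR v k| ≤ c * ⨆ l, |u l - v l| := by
  classical
  have hK0 : 0 < K := lt_trans zero_lt_one hK
  haveI : Nonempty (Fin K) := ⟨⟨0, hK0⟩⟩
  set Ubox : Set (Fin K → ℝ) := Set.univ.pi fun k => Set.Icc (Umin k) (Umax k) with hUbox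
  have hupd : ∀ u ∈ Ubox, ∀ (k : Fin K), ∀ w ∈ Set.Icc (Umin k) (Umax k),
      Function.update u k w ∈ Ubox := by
    intro u hu k w hw i _
    rcases eq_or_ne i k with rfl | h
    · simpa using hw
    · simpa [Function.update_of_ne h] using hu i (Set.mem_univ i)
  have hcontJ : ∀ k, ContinuousOn (J k) O := fun k => (hsmooth k).continuousOn
  -- Part 1 : uniqueness of the minimizer
  have part1 : ∀ u ∈ Ubox, ∀ k, ∀ m ∈ Set.Icc (Umin k) (Umax k),
      (∀ v ∈ Set.Icc (Umin k) (Umax k),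
        J k (Function.update u k m) ≤ J k (Function.update u k v)) → m = BR u k := by
    intro u hu k m hm hmin
    by_contra hne
    have hb := hBR u hu k
    have hcu : Continuous (fun v : ℝ => Function.update u k v) :=
      continuous_iff_continuousAt.mpr fun v => (hasDerivAt_update_fun u k v).continuousAt
    have hgc : ContinuousOn (fun w => J k (Function.update u k w))
        (Set.Icc (Umin k) (Umax k)) :=
      (hcontJ k).comp hcu.continuousOn (fun w hw => hUO (hupd u hu k w hw))
    have hconv : StrictConvexOn ℝ (Set.Icc (Umin k) (Umax k))
        (fun w => J k (Function.update u k w)) := by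
      refine strictConvexOn_of_deriv2_pos (convex_Icc _ _) hgc ?_
      intro w hw
      rw [interior_Icc] at hw
      have hwU : Function.update u k w ∈ Ubox := hupd u hu k w (Set.Ioo_subset_Icc_self hw)
      have hpos : 0 < pd k (pd k (J k)) (Function.update u k w) :=
        lt_of_le_of_lt (Finset.sum_nonneg fun _ _ => abs_nonneg _) (hdom k _ hwU)
      have e1 : deriv (fun w => J k (Function.update u k w))
          = fun v => pd k (J k) (Function.update u k v) := by
        funext v
        simp only [pd, Function.update_idem, Function.update_self]
      have e2 : (deriv^[2] (fun w => J k (Function.update u k w))) w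
          = pd k (pd k (J k)) (Function.update u k w) := by
        rw [show deriv^[2] (fun w => J k (Function.update u k w))
            = deriv (deriv (fun w => J k (Function.update u k w))) from rfl, e1]
        simp only [pd, Function.update_idem, Function.update_self]
      rw [e2]; exact hpos
    have hmemmid : (1/2 : ℝ) • m + (1/2 : ℝ) • BR u k ∈ Set.Icc (Umin k) (Umax k) :=
      (convex_Icc _ _) hm hb.1 (by norm_num) (by norm_num) (by norm_num)
    have hmid := hconv.2 hm hb.1 hne (by norm_num : (0:ℝ) < 1/2)
      (by norm_num : (0:ℝ) < 1/2) (by norm_num)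
    have h2 := hmin _ hmemmid
    have h3 := hb.2 _ hmemmid
    simp only [smul_eq_mul] at hmid h2 h3
    linarith
  refine ⟨part1, ?_⟩
  -- smoothness consequences
  have hdiffJ : ∀ k, ∀ w ∈ O, HasFDerivAt (J k) (fderiv ℝ (J k) w) w := by
    intro k w hw
    exact (((hsmooth k).differentiableOn (by norm_num)).differentiableAt
      (hO.mem_nhds hw)).hasFDerivAt
  have hC1 : ∀ k, ContDiffOn ℝ 1 (fderiv ℝ (J k)) O := fun k =>
    (hsmooth k).fderiv_of_isOpen hO (by norm_num)
  have hdiffF : ∀ k, ∀ w ∈ O,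
      HasFDerivAt (fderiv ℝ (J k)) (fderiv ℝ (fderiv ℝ (J k)) w) w := by
    intro k w hw
    exact (((hC1 k).differentiableOn (by norm_num)).differentiableAt (hO.mem_nhds hw)).hasFDerivAt
  have hΦc : ∀ k, ContinuousOn (fderiv ℝ (fderiv ℝ (J k))) O := fun k =>
    (hC1 k).continuousOn_fderiv_of_isOpen hO le_rfl
  -- identification of second partial derivatives
  have hQ : ∀ k l, ∀ w ∈ O, pd l (pd k (J k)) w
      = fderiv ℝ (fderiv ℝ (J k)) w (Pi.single l 1) (Pi.single k 1) := by
    intro k l w hw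
    have hcont : ContinuousAt (fun v : ℝ => Function.update w l v) (w l) :=
      (hasDerivAt_update_fun w l (w l)).continuousAt
    have hOev : ∀ᶠ v in nhds (w l), Function.update w l v ∈ O := by
      have hmem : O ∈ nhds (Function.update w l (w l)) :=
        hO.mem_nhds (by rwa [Function.update_eq_self])
      exact hcont hmem
    have hev : (fun v => pd k (J k) (Function.update w l v))
        =ᶠ[nhds (w l)] (fun v => fderiv ℝ (J k) (Function.update w l v) (Pi.single k 1)) := by
      filter_upwards [hOev] with v hv
      exact (hasDerivAt_comp_update (hdiffJ k _ hv) k).deriv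
    have h0 : pd l (pd k (J k)) w
        = deriv (fun v => fderiv ℝ (J k) (Function.update w l v) (Pi.single k 1)) (w l) :=
      hev.deriv_eq
    rw [h0]
    exact (hasDerivAt_comp_update_clm (hdiffF k w hw) k l).deriv
  have hdom' : ∀ k, ∀ w ∈ Ubox,
      ∑ l ∈ Finset.univ.erase k,
        |fderiv ℝ (fderiv ℝ (J k)) w (Pi.single l 1) (Pi.single k 1)|
        < fderiv ℝ (fderiv ℝ (J k)) w (Pi.single k 1) (Pi.single k 1) := by
    intro k w hw
    have h := hdom k w hw
    rw [hQ k k w (hUO hw)] at h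
    refine lt_of_le_of_lt (le_of_eq ?_) h
    exact (Finset.sum_congr rfl fun l _ => by rw [hQ k l w (hUO hw)]).symm
  -- the contraction constant
  have hUconv : Convex ℝ Ubox := convex_pi fun i _ => convex_Icc _ _
  have hUcomp : IsCompact Ubox := isCompact_univ_pi fun i => isCompact_Icc
  have hUne : Ubox.Nonempty := ⟨Umin, fun i _ => ⟨le_refl _, hU i⟩⟩
  have hDpos : ∀ k, ∀ w ∈ Ubox,
      0 < fderiv ℝ (fderiv ℝ (J k)) w (Pi.single k 1) (Pi.single k 1) := fun k w hw =>
    lt_of_le_of_lt (Finset.sum_nonneg fun _ _ => abs_nonneg _) (hdom' k w hw)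
  set ρ : Fin K → (Fin K → ℝ) → ℝ := fun k w =>
    (∑ l ∈ Finset.univ.erase k,
      |fderiv ℝ (fderiv ℝ (J k)) w (Pi.single l 1) (Pi.single k 1)|)
    / fderiv ℝ (fderiv ℝ (J k)) w (Pi.single k 1) (Pi.single k 1) with hρdef
  have hρc : ∀ k, ContinuousOn (ρ k) Ubox := by
    intro k
    have hS : ContinuousOn (fun w => ∑ l ∈ Finset.univ.erase k,
        |fderiv ℝ (fderiv ℝ (J k)) w (Pi.single l 1) (Pi.single k 1)|) Ubox := by
      apply continuousOn_finset_sum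
      intro l _
      exact ((((hΦc k).clm_apply continuousOn_const).clm_apply
        continuousOn_const).mono hUO).abs
    have hD : ContinuousOn (fun w =>
        fderiv ℝ (fderiv ℝ (J k)) w (Pi.single k 1) (Pi.single k 1)) Ubox :=
      (((hΦc k).clm_apply continuousOn_const).clm_apply continuousOn_const).mono hUO
    exact hS.div hD (fun w hw => (hDpos k w hw).ne')
  choose wm hwmU hwm using fun k => hUcomp.exists_isMaxOn hUne (hρc k)
  set c : ℝ := Finset.univ.sup' Finset.univ_nonempty (fun k => ρ k (wm k)) with hc
  have hcb : ∀ k, ∀ w ∈ Ubox, ρ k w ≤ c := by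
    intro k w hw
    calc ρ k w ≤ ρ k (wm k) := hwm k hw
    _ ≤ c := Finset.le_sup' (fun j => ρ j (wm j)) (Finset.mem_univ k)
  have hc0 : 0 ≤ c := by
    refine le_trans ?_ (Finset.le_sup' (fun j => ρ j (wm j))
      (Finset.mem_univ (⟨0, hK0⟩ : Fin K)))
    exact div_nonneg (Finset.sum_nonneg fun _ _ => abs_nonneg _)
      (hDpos _ _ (hwmU _)).le
  have hc1 : c < 1 := by
    rw [hc, Finset.sup'_lt_iff]
    intro k _
    show ρ k (wm k) < 1
    rw [hρdef, div_lt_one (hDpos k _ (hwmU k))]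
    exact hdom' k _ (hwmU k)
  refine ⟨c, hc0, hc1, ?_⟩
  intro u hu v hv k
  have hbdd : BddAbove (Set.range fun l => |u l - v l|) :=
    Set.Finite.bddAbove (Set.finite_range _)
  have hNl : ∀ l, |u l - v l| ≤ ⨆ l, |u l - v l| := fun l => le_ciSup hbdd l
  have hN0 : 0 ≤ ⨆ l, |u l - v l| := le_trans (abs_nonneg _) (hNl k)
  set N : ℝ := ⨆ l, |u l - v l| with hN
  set a : ℝ := BR u k with ha
  set b : ℝ := BR v k with hbdef
  have hak : a ∈ Set.Icc (Umin k) (Umax k) := (hBR u hu k).1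
  have hbk : b ∈ Set.Icc (Umin k) (Umax k) := (hBR v hv k).1
  by_cases hab : a = b
  · rw [hab, sub_self, abs_zero]; exact mul_nonneg hc0 hN0
  set x : Fin K → ℝ := Function.update u k a with hx
  set y : Fin K → ℝ := Function.update v k b with hy
  have hxU : x ∈ Ubox := hupd u hu k a hak
  have hyU : y ∈ Ubox := hupd v hv k b hbk
  set γ : ℝ → (Fin K → ℝ) := fun t => x + t • (y - x) with hγ
  have hγU : ∀ t ∈ Set.Icc (0:ℝ) 1, γ t ∈ Ubox := by
    intro t ht
    have hconv : (1 - t) • x + t • y ∈ Ubox :=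
      hUconv hxU hyU (by linarith [ht.1, ht.2]) ht.1 (by ring)
    have : γ t = (1 - t) • x + t • y := by
      funext i
      simp only [hγ, Pi.add_apply, Pi.smul_apply, Pi.sub_apply, smul_eq_mul]
      ring
    rw [this]; exact hconv
  -- derivative of ψ
  have hγd : ∀ t : ℝ, HasDerivAt γ (y - x) t := by
    intro t
    simpa [hγ] using ((hasDerivAt_id t).smul_const (y - x)).const_add x
  have hψd : ∀ t ∈ Set.Icc (0:ℝ) 1,
      HasDerivAt (fun t => fderiv ℝ (J k) (γ t) (Pi.single k 1))
        (fderiv ℝ (fderiv ℝ (J k)) (γ t) (y - x) (Pi.single k 1)) t := by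
    intro t ht
    have hFk : HasFDerivAt (fun z => fderiv ℝ (J k) z (Pi.single k 1))
        ((ContinuousLinearMap.apply ℝ ℝ (Pi.single k 1)).comp
          (fderiv ℝ (fderiv ℝ (J k)) (γ t))) (γ t) :=
      hasFDerivAt_clm_eval (hdiffF k (γ t) (hUO (hγU t ht)))
    have h := hFk.comp_hasDerivAt t (hγd t)
    exact h
  obtain ⟨s, hs01, hseq⟩ := exists_hasDerivAt_eq_slope
      (fun t => fderiv ℝ (J k) (γ t) (Pi.single k 1))
      (fun t => fderiv ℝ (fderiv ℝ (J k)) (γ t) (y - x) (Pi.single k 1))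
      one_pos
      (fun t ht => (hψd t ht).continuousAt.continuousWithinAt)
      (fun t ht => hψd t (Set.Ioo_subset_Icc_self ht))
  have hγ0 : γ 0 = x := by
    funext i
    simp [hγ]
  have hγ1 : γ 1 = y := by
    funext i
    simp only [hγ, Pi.add_apply, Pi.smul_apply, Pi.sub_apply, one_smul, smul_eq_mul]
    ring
  simp only [hγ0, hγ1, sub_zero, div_one] at hseq
  have hsU : γ s ∈ Ubox := hγU s (Set.Ioo_subset_Icc_self hs01)
  -- variational inequalities
  have hVIu : ∀ w ∈ Set.Icc (Umin k) (Umax k),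
      0 ≤ fderiv ℝ (J k) x (Pi.single k 1) * (w - a) := by
    intro w hw
    refine deriv_mul_nonneg_of_min (g := fun z => J k (Function.update u k z))
      hak hw ?_ ?_
    · intro z hz
      have h1 := (hBR u hu k).2 z hz
      rw [ha]
      exact h1
    have hxO : x ∈ O := hUO hxU
    have h := hasDerivAt_comp_update (hdiffJ k x hxO) k
    simpa [hx, Function.update_idem, Function.update_self] using h
  have hVIv : ∀ w ∈ Set.Icc (Umin k) (Umax k),
      0 ≤ fderiv ℝ (J k) y (Pi.single k 1) * (w - b) := by
    intro w hw
    refine deriv_mul_nonneg_of_min (g := fun z => J k (Function.update v k z))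
      hbk hw ?_ ?_
    · intro z hz
      have h1 := (hBR v hv k).2 z hz
      rw [hbdef]
      exact h1
    have hyO : y ∈ O := hUO hyU
    have h := hasDerivAt_comp_update (hdiffJ k y hyO) k
    simpa [hy, Function.update_idem, Function.update_self] using h
  have hVI : (fderiv ℝ (J k) y (Pi.single k 1) - fderiv ℝ (J k) x (Pi.single k 1))
      * (b - a) ≤ 0 := by
    have h1 := hVIu b hbk
    have h2 := hVIv a hak
    nlinarith [h1, h2]
  -- expand the second derivative along the segment
  set T : Fin K → ℝ := fun l =>
    fderiv ℝ (fderiv ℝ (J k)) (γ s) (Pi.single l 1) (Pi.single k 1) with hT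
  have hyx : y - x = ∑ l, (y l - x l) • (Pi.single l 1 : Fin K → ℝ) := by
    funext i
    simp [Finset.sum_apply, Pi.single_apply]
  have hexp : fderiv ℝ (fderiv ℝ (J k)) (γ s) (y - x) (Pi.single k 1)
      = ∑ l, (y l - x l) * T l := by
    rw [hyx]
    simp [map_sum, map_smul, hT]
  have hyk : y k = b := by simp [hy]
  have hxk : x k = a := by simp [hx]
  have hsplit : ∑ l, (y l - x l) * T l
      = (∑ l ∈ Finset.univ.erase k, (v l - u l) * T l) + (b - a) * T k := by
    rw [← Finset.sum_erase_add Finset.univ _ (Finset.mem_univ k), hyk, hxk]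
    congr 1
    refine Finset.sum_congr rfl fun l hl => ?_
    have hne : l ≠ k := Finset.ne_of_mem_erase hl
    rw [hy, hx, Function.update_of_ne hne, Function.update_of_ne hne]
  have hds : ∑ l ∈ Finset.univ.erase k, |T l| < T k := hdom' k (γ s) hsU
  have hTk : 0 < T k :=
    lt_of_le_of_lt (Finset.sum_nonneg fun _ _ => abs_nonneg _) hds
  have hkey : ((∑ l ∈ Finset.univ.erase k, (v l - u l) * T l) + (b - a) * T k)
      * (b - a) ≤ 0 := by
    have heq : fderiv ℝ (J k) y (Pi.single k 1) - fderiv ℝ (J k) x (Pi.single k 1)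
        = (∑ l ∈ Finset.univ.erase k, (v l - u l) * T l) + (b - a) * T k := by
      rw [← hseq, hexp, hsplit]
    rw [← heq]
    exact hVI
  have habpos : 0 < |b - a| := abs_pos.mpr (sub_ne_zero.mpr (Ne.symm hab))
  have hterm : ∀ l ∈ Finset.univ.erase k,
      -((v l - u l) * T l * (b - a)) ≤ |T l| * (N * |b - a|) := by
    intro l _
    calc -((v l - u l) * T l * (b - a)) ≤ |(v l - u l) * T l * (b - a)| := neg_le_abs _
    _ = |v l - u l| * |T l| * |b - a| := by rw [abs_mul, abs_mul]
    _ ≤ N * |T l| * |b - a| := by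
        have h := hNl l
        rw [abs_sub_comm] at h
        gcongr
    _ = |T l| * (N * |b - a|) := by ring
  have hsum := Finset.sum_le_sum hterm
  have hL : ∑ l ∈ Finset.univ.erase k, -((v l - u l) * T l * (b - a))
      = -((∑ l ∈ Finset.univ.erase k, (v l - u l) * T l) * (b - a)) := by
    rw [Finset.sum_neg_distrib, ← Finset.sum_mul]
  have hR : ∑ l ∈ Finset.univ.erase k, |T l| * (N * |b - a|)
      = (∑ l ∈ Finset.univ.erase k, |T l|) * (N * |b - a|) :=
    (Finset.sum_mul _ _ _).symm
  rw [hL, hR] at hsum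
  have hkey3 : T k * (|b - a| * |b - a|)
      ≤ (∑ l ∈ Finset.univ.erase k, |T l|) * (N * |b - a|) := by
    rw [abs_mul_abs_self]
    nlinarith [hkey, hsum]
  have h4 : T k * |b - a| ≤ (∑ l ∈ Finset.univ.erase k, |T l|) * N :=
    le_of_mul_le_mul_right (by nlinarith [hkey3]) habpos
  have hρ : (∑ l ∈ Finset.univ.erase k, |T l|) / T k ≤ c := hcb k (γ s) hsU
  have h5 : |b - a| ≤ (∑ l ∈ Finset.univ.erase k, |T l|) / T k * N := by
    rw [div_mul_eq_mul_div, le_div_iff₀ hTk]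
    nlinarith [h4]
  have hgoal : |b - a| ≤ c * N := le_trans h5 (mul_le_mul_of_nonneg_right hρ hN0)
  rw [abs_sub_comm] at hgoal
  exact hgoal
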